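/- Let M ⊆ ℝⁿ be a nonempty closed set, let α̲, ᾱ : [0, ∞) → [0, ∞) be continuous strictly increasing functions, and let V : ℝⁿ → ℝ satisfy α̲(dist(z, M)) ≤ V(z) ≤ ᾱ(dist(z, M)) for all z ∈ ℝⁿ. Let μ > 0, v > 0, P > 0 with α̲(v) ≤ ᾱ(P), and let x : [0, ∞) → ℝⁿ be a trajectory with dist(x(0), M) ≤ P such that t ↦ V(x(t)) is differentiable and its derivative at each t ≥ 0 with V(x(t)) > α̲(v) is at most -μ. Then for every t ≥ (ᾱ(P) - α̲(v))/μ, it holds that dist(x(t), M) ≤ v. -/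

import Mathlib

/-- Quantitative conclusion of Lemma 2: under a class-K sandwich bound on the
boundary layer Lyapunov function `V` relative to the manifold `M` and a uniform
decrease rate `μ` along the trajectory outside the level set `α̲ v`, the trajectory
enters and remains in the `v`-neighborhood of `M` after flow time `(ᾱ P - α̲ v)/μ`. -/
theorem boundary_layer_attraction_time
    {n : ℕ}
    (M : Set (EuclideanSpace ℝ (Fin n))) (hMne : M.Nonempty) (hMc : IsClosed M)
    (αlow αup : ℝ → ℝ)
    (hαlowC : ContinuousOn αlow (Set.Ici 0)) (hαupC : ContinuousOn αup (Set.Ici 0))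
    (hαlowM : StrictMonoOn αlow (Set.Ici 0)) (hαupM : StrictMonoOn αup (Set.Ici 0))
    (hαlowPos : Set.MapsTo αlow (Set.Ici 0) (Set.Ici 0))
    (hαupPos : Set.MapsTo αup (Set.Ici 0) (Set.Ici 0))
    (V : EuclideanSpace ℝ (Fin n) → ℝ)
    (hsandwich : ∀ z, αlow (Metric.infDist z M) ≤ V z ∧
      V z ≤ αup (Metric.infDist z M))
    (μ v P : ℝ) (hμ : 0 < μ) (hv : 0 < v) (hP : 0 < P)
    (hlev : αlow v ≤ αup P)
    (x : ℝ → EuclideanSpace ℝ (Fin n))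
    (hx0 : Metric.infDist (x 0) M ≤ P)
    (hVdiff : Differentiable ℝ (fun t => V (x t)))
    (hVderiv : ∀ t : ℝ, 0 ≤ t → αlow v < V (x t) →
      deriv (fun s => V (x s)) t ≤ -μ) :
    ∀ t : ℝ, (αup P - αlow v) / μ ≤ t → Metric.infDist (x t) M ≤ v := by
  set W : ℝ → ℝ := fun t => V (x t) with hWdef
  set c := αlow v with hc
  have hWcont : Continuous W := hVdiff.continuous
  have hd0 : (0:ℝ) ≤ Metric.infDist (x 0) M := Metric.infDist_nonneg
  have hW0 : W 0 ≤ αup P := le_trans (hsandwich (x 0)).2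
    (hαupM.monotoneOn (Set.mem_Ici.2 hd0) (Set.mem_Ici.2 hP.le) hx0)
  set τ := (αup P - c)/μ with hτdef
  have hτ0 : 0 ≤ τ := div_nonneg (sub_nonneg.2 hlev) hμ.le
  have hinv : ∀ t₀, 0 ≤ t₀ → W t₀ ≤ c → ∀ t₁, t₀ ≤ t₁ → W t₁ ≤ c := by
    intro t₀ ht₀ hWt₀ t₁ ht
    by_contra hgt
    push_neg at hgt
    set A := {u | u ∈ Set.Icc t₀ t₁ ∧ W u ≤ c} with hA
    have hAne : A.Nonempty := ⟨t₀, ⟨le_refl _, ht⟩, hWt₀⟩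
    have hAbdd : BddAbove A := ⟨t₁, fun u hu => hu.1.2⟩
    have hAclosed : IsClosed A :=
      (isClosed_Icc).inter (isClosed_le hWcont continuous_const)
    set s := sSup A with hs
    have hsA : s ∈ A := hAclosed.csSup_mem hAne hAbdd
    have hst₁ : s ≤ t₁ := csSup_le hAne fun u hu => hu.1.2
    have hst₀ : t₀ ≤ s := le_csSup hAbdd ⟨⟨le_refl _, ht⟩, hWt₀⟩
    have hslt : s < t₁ := lt_of_le_of_ne hst₁ (by
      intro h
      rw [h] at hsA
      exact absurd hsA.2 (not_le.2 hgt))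
    have hstrict : StrictAntiOn W (Set.Icc s t₁) := by
      apply strictAntiOn_of_deriv_neg (convex_Icc s t₁) hWcont.continuousOn
      intro u hu
      rw [interior_Icc] at hu
      have hu0 : 0 ≤ u := le_trans (le_trans ht₀ hst₀) hu.1.le
      have hWu : c < W u := by
        by_contra hle
        push_neg at hle
        have hmem : u ∈ A := ⟨⟨le_trans hst₀ hu.1.le, hu.2.le⟩, hle⟩
        exact absurd (le_csSup hAbdd hmem) (not_le.2 hu.1)
      have := hVderiv u hu0 hWu
      linarith
    have := hstrict (Set.left_mem_Icc.2 hslt.le) (Set.right_mem_Icc.2 hslt.le) hslt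
    linarith [hsA.2]
  have hreach : ∃ t₀ ∈ Set.Icc (0:ℝ) τ, W t₀ ≤ c := by
    by_contra h
    push_neg at h
    have hanti : AntitoneOn (fun t => W t + μ * t) (Set.Icc 0 τ) := by
      apply antitoneOn_of_deriv_nonpos (convex_Icc 0 τ)
        ((hWcont.add (continuous_const.mul continuous_id)).continuousOn)
      · intro u hu
        exact ((hVdiff u).add ((differentiable_id.const_mul μ) u)).differentiableWithinAt
      · intro u hu
        rw [interior_Icc] at hu
        have hWu : c < W u := h u ⟨hu.1.le, hu.2.le⟩
        have hderiv : HasDerivAt (fun t => W t + μ * t) (deriv W u + μ * 1) u :=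
          (hVdiff u).hasDerivAt.add ((hasDerivAt_id u).const_mul μ)
        change deriv (fun t => W t + μ * t) u ≤ 0
        rw [hderiv.deriv]
        have := hVderiv u hu.1.le hWu
        linarith
    have hkey := hanti (Set.left_mem_Icc.2 hτ0) (Set.right_mem_Icc.2 hτ0) hτ0
    have hμτ : μ * τ = αup P - c := by
      rw [hτdef]
      field_simp
    have hWτ : c < W τ := h τ ⟨hτ0, le_refl _⟩
    simp only [mul_zero, add_zero] at hkey
    linarith
  obtain ⟨t₀, ht₀, hWt₀⟩ := hreach
  intro t ht
  have hWt : W t ≤ c := hinv t₀ ht₀.1 hWt₀ t (le_trans ht₀.2 ht)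
  have hdt : (0:ℝ) ≤ Metric.infDist (x t) M := Metric.infDist_nonneg
  by_contra hgt
  push_neg at hgt
  have hmono := hαlowM (Set.mem_Ici.2 hv.le) (Set.mem_Ici.2 hdt) hgt
  have hsand := (hsandwich (x t)).1
  linarith
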